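/- arXiv:2603.28423 — 2 statements merged into one kernel-verified Lean document; each statement's English description precedes it below -/
import Mathlib

section
/- (Corollary 1) Let G be a simple graph on the finite vertex set V and ν a probability measure on Ω. Then ν satisfies the global Markov property with respect to G if and only if ν satisfies the connected-set Markov property with respect to G. -/
set_option linter.unusedSectionVars false
set_option maxHeartbeats 2000000


open MeasureTheory ProbabilityTheory

/-- The map `ω ↦ (Y a ω)_{a ∈ S}`, i.e. the random vector `Y_S`. -/
def restr {Ω : Type*} {V : Type*} {E : V → Type*} (Y : ∀ a, Ω → E a) (S : Set V) :
    Ω → ∀ a : S, E a := fun ω a => Y a ω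

lemma measurable_restr {Ω : Type*} [MeasurableSpace Ω] {V : Type*} {E : V → Type*}
    [∀ a, MeasurableSpace (E a)] {Y : ∀ a, Ω → E a} (hY : ∀ a, Measurable (Y a)) (S : Set V) :
    Measurable (restr Y S) :=
  measurable_pi_lambda _ fun a => hY a

/-- `C` separates `A` from `B` in `G`: every walk in `G` from a vertex of `A` to a vertex of
`B` contains a vertex of `C`. -/
def Separates {V : Type*} (G : SimpleGraph V) (A B C : Set V) : Prop :=
  ∀ a ∈ A, ∀ b ∈ B, ∀ p : G.Walk a b, ∃ c ∈ p.support, c ∈ C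

/-- Vertex set of a connected component of the subgraph of `G` induced on `D`. -/
def componentSet {V : Type*} (G : SimpleGraph V) (D : Set V)
    (c : (G.induce D).ConnectedComponent) : Set V :=
  Subtype.val '' {v : D | (G.induce D).connectedComponentMk v = c}

section Graph
variable {V : Type*} {G : SimpleGraph V} {D : Set V}

lemma mem_componentSet_iff {c : (G.induce D).ConnectedComponent} {x : V} :
    x ∈ componentSet G D c ↔ ∃ h : x ∈ D, (G.induce D).connectedComponentMk ⟨x, h⟩ = c := by
  constructor
  · rintro ⟨v, hv, rfl⟩; exact ⟨v.2, hv⟩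
  · rintro ⟨h, hc⟩; exact ⟨⟨x, h⟩, hc, rfl⟩

lemma componentSet_subset (c : (G.induce D).ConnectedComponent) :
    componentSet G D c ⊆ D := by
  rintro x ⟨v, _, rfl⟩; exact v.2

lemma componentSet_nonempty (c : (G.induce D).ConnectedComponent) :
    (componentSet G D c).Nonempty := by
  induction c using SimpleGraph.ConnectedComponent.ind with
  | _ v => exact ⟨v.1, ⟨v, rfl, rfl⟩⟩

lemma componentSet_eq_of_mem {c c' : (G.induce D).ConnectedComponent} {x : V}
    (h1 : x ∈ componentSet G D c) (h2 : x ∈ componentSet G D c') : c = c' := by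
  obtain ⟨h, rfl⟩ := mem_componentSet_iff.mp h1
  obtain ⟨h', hc'⟩ := mem_componentSet_iff.mp h2
  exact hc'

lemma reachable_of_walk_support {a b : V}
    (p : G.Walk a b) (hsup : ∀ x ∈ p.support, x ∈ D) :
    ∃ (ha : a ∈ D) (hb : b ∈ D), (G.induce D).Reachable ⟨a, ha⟩ ⟨b, hb⟩ := by
  induction p with
  | nil => exact ⟨hsup _ (by simp), hsup _ (by simp), SimpleGraph.Reachable.refl _⟩
  | @cons u v w h p ih =>
    obtain ⟨hv, hw, hr⟩ := ih (fun x hx => hsup x (by simp [hx]))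
    have hu : u ∈ D := hsup _ (by simp)
    have hadj : (G.induce D).Adj ⟨u, hu⟩ ⟨v, hv⟩ := by
      simp only [SimpleGraph.comap_adj, Function.Embedding.coe_subtype]
      exact h
    exact ⟨hu, hw, hadj.reachable.trans hr⟩

lemma support_walk_map_mem {u v : ↥D} (p : (G.induce D).Walk u v) {x : V}
    (hx : x ∈ (p.map (SimpleGraph.Embedding.induce D).toHom).support) : x ∈ D := by
  rw [SimpleGraph.Walk.support_map] at hx
  obtain ⟨y, -, rfl⟩ := List.mem_map.mp hx
  exact y.2

lemma separates_componentSet (c : (G.induce D).ConnectedComponent) :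
    Separates G (componentSet G D c) (D \ componentSet G D c) Dᶜ := by
  intro a ha b hb p
  by_contra hcon
  push_neg at hcon
  obtain ⟨haD, hbD, hr⟩ := reachable_of_walk_support p
    (fun x hx => not_not.mp (fun hxc => (hcon x hx) hxc))
  obtain ⟨ha', hac⟩ := mem_componentSet_iff.mp ha
  have : b ∈ componentSet G D c := by
    refine mem_componentSet_iff.mpr ⟨hbD, ?_⟩
    rw [← hac]
    exact (SimpleGraph.ConnectedComponent.sound hr).symm
  exact hb.2 this

lemma exists_not_reachable (hD : D.Nonempty) (h : ¬ (G.induce D).Connected) :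
    ∃ u v : ↥D, ¬ (G.induce D).Reachable u v := by
  by_contra hcon
  push_neg at hcon
  obtain ⟨x, hx⟩ := hD
  exact h ((SimpleGraph.connected_iff _).mpr ⟨hcon, ⟨⟨x, hx⟩⟩⟩)

end Graph

section MT
variable {Ω V : Type*} [MeasurableSpace Ω] {E : V → Type*} [∀ a, MeasurableSpace (E a)]
  {Y : ∀ a, Ω → E a}

lemma measurable_comap' {α β : Type*} {m : MeasurableSpace β} {f : α → β} :
    Measurable[MeasurableSpace.comap f m] f := fun s hs => ⟨s, hs, rfl⟩

lemma measurable_pi_lambda' {α δ : Type*} {π : δ → Type*} {m : MeasurableSpace α}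
    [∀ a, MeasurableSpace (π a)] (f : α → ∀ a, π a)
    (hf : ∀ a, Measurable[m] fun c => f c a) : Measurable[m] f :=
  measurable_pi_lambda f hf

lemma comap_le_of_measurable {α β : Type*} {m : MeasurableSpace α} {mb : MeasurableSpace β}
    {f : α → β} (hf : Measurable[m] f) : MeasurableSpace.comap f mb ≤ m := by
  rintro s ⟨t, ht, rfl⟩
  exact hf ht

lemma comap_restr_mono {S T : Set V} (h : S ⊆ T) :
    MeasurableSpace.comap (restr Y S) MeasurableSpace.pi ≤
      MeasurableSpace.comap (restr Y T) MeasurableSpace.pi := by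
  have heq : restr Y S = (fun (x : ∀ a : T, E a) (a : S) => x ⟨a.1, h a.2⟩) ∘ restr Y T := rfl
  rw [heq, ← MeasurableSpace.comap_comp]
  exact MeasurableSpace.comap_mono
    (Measurable.comap_le (measurable_pi_lambda _ (fun a => measurable_pi_apply _)))

lemma kernel_indepFun_mono {α β γ : Type*} {_mα : MeasurableSpace α}
    {mβ : MeasurableSpace β} {mγ : MeasurableSpace γ}
    {f : Ω → β} {g : Ω → γ} {κ : Kernel α Ω} {μ : Measure α}
    (h : Kernel.IndepFun f g κ μ) {m1' m2' : MeasurableSpace Ω}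
    (h1 : m1' ≤ MeasurableSpace.comap f mβ) (h2 : m2' ≤ MeasurableSpace.comap g mγ) :
    Kernel.Indep m1' m2' κ μ :=
  fun t1 t2 ht1 ht2 => h t1 t2 (h1 _ ht1) (h2 _ ht2)

end MT

lemma iCondIndepFun_congr {Ω : Type*} [mΩ : MeasurableSpace Ω] [StandardBorelSpace Ω]
    {ν : Measure Ω} [IsFiniteMeasure ν]
    {m1 m2 : MeasurableSpace Ω} (h : m1 = m2) (h1 : m1 ≤ mΩ) (h2 : m2 ≤ mΩ)
    {ι : Type*} {β : ι → Type*} {mβ : ∀ i, MeasurableSpace (β i)} {f : ∀ i, Ω → β i}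
    (hI : Kernel.iIndepFun (m := mβ) f (condExpKernel (mΩ := mΩ) ν m1) (ν.trim h1)) :
    Kernel.iIndepFun (m := mβ) f (condExpKernel (mΩ := mΩ) ν m2) (ν.trim h2) := by
  subst h; exact hI

section MarkovProperties

variable {Ω : Type*} [MeasurableSpace Ω] [StandardBorelSpace Ω] [Nonempty Ω]
  {V : Type*} [Fintype V]
  {E : V → Type*} [∀ a, MeasurableSpace (E a)] [∀ a, StandardBorelSpace (E a)]

/-- The global Markov property of `ν` with respect to the simple graph `G`. -/
def GMP (Y : ∀ a, Ω → E a) (hY : ∀ a, Measurable (Y a)) (ν : Measure Ω) [IsFiniteMeasure ν]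
    (G : SimpleGraph V) : Prop :=
  ∀ (A B C : Set V), A.Nonempty → B.Nonempty →
    Disjoint A B → Disjoint A C → Disjoint B C →
    Separates G A B C →
    CondIndepFun (MeasurableSpace.comap (restr Y C) MeasurableSpace.pi)
      ((measurable_restr hY C).comap_le) (restr Y A) (restr Y B) ν

/-- The connected-set Markov property of `ν` with respect to the simple graph `G`. -/
def CSMP (Y : ∀ a, Ω → E a) (hY : ∀ a, Measurable (Y a)) (ν : Measure Ω) [IsFiniteMeasure ν]
    (G : SimpleGraph V) : Prop :=
  ∀ (D : Set V), D.Nonempty → ¬ (G.induce D).Connected →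
    iCondIndepFun (MeasurableSpace.comap (restr Y Dᶜ) MeasurableSpace.pi)
      ((measurable_restr hY Dᶜ).comap_le)
      (m := fun _ => MeasurableSpace.pi)
      (fun c : (G.induce D).ConnectedComponent => restr Y (componentSet G D c)) ν

/-- **Corollary 1.** A probability measure `ν` satisfies the global Markov
property with respect to a simple graph `G` if and only if it satisfies the connected-set
Markov property with respect to `G`. -/
theorem GMP_iff_CSMP (Y : ∀ a, Ω → E a) (hY : ∀ a, Measurable (Y a))
    (ν : Measure Ω) [IsProbabilityMeasure ν] (G : SimpleGraph V) :
    GMP Y hY ν G ↔ CSMP Y hY ν G := by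
  classical
  constructor
  · -- GMP → CSMP
    intro hg D hD hDconn
    intro s
    induction s using Finset.induction_on with
    | empty =>
      intro F _hF
      refine Filter.Eventually.of_forall (fun a => ?_)
      simp
    | @insert i s his ih =>
      intro F hF
      -- B := D \ componentSet G D i is nonempty
      obtain ⟨u, v, huv⟩ := exists_not_reachable hD hDconn
      have hBne : (D \ componentSet G D i).Nonempty := by
        by_cases hui : (G.induce D).connectedComponentMk u = i
        · refine ⟨v.1, v.2, fun hv => ?_⟩
          obtain ⟨h, hc⟩ := mem_componentSet_iff.mp hv
          exact huv (SimpleGraph.ConnectedComponent.exact (hui.trans hc.symm))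
        · refine ⟨u.1, u.2, fun hu => ?_⟩
          obtain ⟨h, hc⟩ := mem_componentSet_iff.mp hu
          exact hui hc
      have hgm := hg (componentSet G D i) (D \ componentSet G D i) Dᶜ
        (componentSet_nonempty i) hBne
        (Set.disjoint_left.mpr (fun x hx hx' => hx'.2 hx))
        (Set.disjoint_left.mpr (fun x hx hx' => hx' (componentSet_subset i hx)))
        (Set.disjoint_left.mpr (fun x hx hx' => hx' hx.1))
        (separates_componentSet i)
      have hmeas2 : MeasurableSet[MeasurableSpace.comap
          (restr Y (D \ componentSet G D i)) MeasurableSpace.pi] (⋂ j ∈ s, F j) := by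
        refine MeasurableSet.biInter s.countable_toSet (fun j hj => ?_)
        have hsub : componentSet G D j ⊆ D \ componentSet G D i := fun x hx =>
          ⟨componentSet_subset j hx, fun hx' => his (by
            rw [componentSet_eq_of_mem hx hx'] at hj; exact hj)⟩
        exact comap_restr_mono hsub _ (hF j (Finset.mem_insert_of_mem hj))
      have h2 := hgm (F i) (⋂ j ∈ s, F j) (hF i (Finset.mem_insert_self i s)) hmeas2
      have h3 := ih (fun j hj => hF j (Finset.mem_insert_of_mem hj))
      filter_upwards [h2, h3] with a ha2 ha3
      rw [Finset.set_biInter_insert, Finset.prod_insert his, ha2, ha3]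
  · -- CSMP → GMP
    intro hc A B C hA hB hAB hAC hBC hsep
    have hAD : A ⊆ Cᶜ := fun x hx => Set.disjoint_left.mp hAC hx
    have hBD : B ⊆ Cᶜ := fun x hx => Set.disjoint_left.mp hBC hx
    obtain ⟨a0, ha0⟩ := hA
    obtain ⟨b0, hb0⟩ := hB
    have hDne : (Cᶜ : Set V).Nonempty := ⟨a0, hAD ha0⟩
    have hnc : ¬ (G.induce (Cᶜ : Set V)).Connected := by
      intro hcon
      obtain ⟨p⟩ := hcon.preconnected ⟨a0, hAD ha0⟩ ⟨b0, hBD hb0⟩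
      obtain ⟨c, hcq, hcC⟩ := hsep a0 ha0 b0 hb0
        (p.map (SimpleGraph.Embedding.induce (Cᶜ : Set V)).toHom)
      exact support_walk_map_mem p hcq hcC
    have hI' := hc Cᶜ hDne hnc
    have hmeq : MeasurableSpace.comap (restr Y (Cᶜᶜ : Set V)) MeasurableSpace.pi
        = MeasurableSpace.comap (restr Y C) MeasurableSpace.pi :=
      le_antisymm (comap_restr_mono (compl_compl C).le)
        (comap_restr_mono (compl_compl C).ge)
    have hI := iCondIndepFun_congr hmeq ((measurable_restr hY (Cᶜᶜ : Set V)).comap_le)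
      ((measurable_restr hY C).comap_le) hI'
    set D : Set V := Cᶜ with hDdef
    haveI : Finite ↥D := Subtype.finite
    haveI : Fintype ((G.induce D).ConnectedComponent) := Fintype.ofFinite _
    set S : Finset ((G.induce D).ConnectedComponent) :=
      Finset.univ.filter (fun c => ∃ x ∈ A, x ∈ componentSet G D c) with hSdef
    have h2 := ProbabilityTheory.Kernel.iIndepFun.indepFun_finset S Sᶜ disjoint_compl_right hI
      (fun c => measurable_restr hY _)
    have hmA : MeasurableSpace.comap (restr Y A) MeasurableSpace.pi ≤
        MeasurableSpace.comap
          (fun ω (i : ↥(S : Finset _)) => restr Y (componentSet G D i.1) ω)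
          MeasurableSpace.pi := by
      refine comap_le_of_measurable (measurable_pi_lambda' _ (fun a => ?_))
      have haD : (a : V) ∈ D := hAD a.2
      have hcS : ((G.induce D).connectedComponentMk ⟨a.1, haD⟩) ∈ S := by
        rw [hSdef, Finset.mem_filter]
        exact ⟨Finset.mem_univ _, a.1, a.2, mem_componentSet_iff.mpr ⟨haD, rfl⟩⟩
      have hmem : (a : V) ∈ componentSet G D ((G.induce D).connectedComponentMk ⟨a.1, haD⟩) :=
        mem_componentSet_iff.mpr ⟨haD, rfl⟩
      have h1 : Measurable[MeasurableSpace.comap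
          (fun ω (i : ↥(S : Finset _)) => restr Y (componentSet G D i.1) ω) MeasurableSpace.pi]
          (fun ω (i : ↥(S : Finset _)) => restr Y (componentSet G D i.1) ω) := measurable_comap'
      have h2 := (measurable_pi_apply
        (⟨(G.induce D).connectedComponentMk ⟨a.1, haD⟩, hcS⟩ : ↥(S : Finset _))).comp h1
      exact (measurable_pi_apply (⟨a.1, hmem⟩ : ↥(componentSet G D _))).comp h2
    have hmB : MeasurableSpace.comap (restr Y B) MeasurableSpace.pi ≤
        MeasurableSpace.comap
          (fun ω (i : ↥(Sᶜ : Finset _)) => restr Y (componentSet G D i.1) ω)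
          MeasurableSpace.pi := by
      refine comap_le_of_measurable (measurable_pi_lambda' _ (fun b => ?_))
      have hbD : (b : V) ∈ D := hBD b.2
      have hcT : ((G.induce D).connectedComponentMk ⟨b.1, hbD⟩) ∈ Sᶜ := by
        rw [Finset.mem_compl, hSdef, Finset.mem_filter]
        rintro ⟨-, x, hxA, hxK⟩
        -- x ∈ A is in the same component as b ∈ B: contradiction with separation
        obtain ⟨hxD, hxc⟩ := mem_componentSet_iff.mp hxK
        have hr : (G.induce D).Reachable ⟨x, hxD⟩ ⟨b.1, hbD⟩ :=
          SimpleGraph.ConnectedComponent.exact hxc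
        obtain ⟨p⟩ := hr
        obtain ⟨c, hcq, hcC⟩ := hsep x hxA b.1 b.2
          (p.map (SimpleGraph.Embedding.induce D).toHom)
        exact support_walk_map_mem p hcq hcC
      have hmem : (b : V) ∈ componentSet G D ((G.induce D).connectedComponentMk ⟨b.1, hbD⟩) :=
        mem_componentSet_iff.mpr ⟨hbD, rfl⟩
      have h1 : Measurable[MeasurableSpace.comap
          (fun ω (i : ↥(Sᶜ : Finset _)) => restr Y (componentSet G D i.1) ω) MeasurableSpace.pi]
          (fun ω (i : ↥(Sᶜ : Finset _)) => restr Y (componentSet G D i.1) ω) := measurable_comap'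
      have h2 := (measurable_pi_apply
        (⟨(G.induce D).connectedComponentMk ⟨b.1, hbD⟩, hcT⟩ : ↥(Sᶜ : Finset _))).comp h1
      exact (measurable_pi_apply (⟨b.1, hmem⟩ : ↥(componentSet G D _))).comp h2
    exact kernel_indepFun_mono h2
      (m1' := MeasurableSpace.comap (restr Y A) MeasurableSpace.pi)
      (m2' := MeasurableSpace.comap (restr Y B) MeasurableSpace.pi) hmA hmB

end MarkovProperties
end

section
/- Let D ⊆ V and let K_1, …, K_r be a partition of D into nonempty pairwise disjoint sets. If for every x ∈ 𝒳 the random vectors Y_{K_1}, …, Y_{K_r} are mutually conditionally independent given Y_{V∖D} under the conditional measure μ_x = μ(· | X = x), then under μ the random vectors Y_{K_1}, …, Y_{K_r} are mutually conditionally independent given the pair (Y_{V∖D}, X). -/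
open MeasureTheory ProbabilityTheory

section Aux

variable {Ω 𝒳 : Type*} [mΩ : MeasurableSpace Ω]
  [Fintype 𝒳] [MeasurableSpace 𝒳] [MeasurableSingletonClass 𝒳]

lemma aux_restrict_eq (μ : Measure Ω) [IsFiniteMeasure μ] {s : Set Ω} (hs : μ s ≠ 0) :
    μ.restrict s = μ s • μ[|s] := by
  rw [ProbabilityTheory.cond, smul_smul, ENNReal.mul_inv_cancel hs (measure_ne_top _ _), one_smul]

lemma aux_integrable_cond (μ : Measure Ω) [IsFiniteMeasure μ] {s : Set Ω}
    {f : Ω → ℝ} (hf : Integrable f μ) : Integrable f (μ[|s]) := by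
  by_cases hs : μ s = 0
  · rw [cond_eq_zero_of_meas_eq_zero hs]
    exact integrable_zero_measure
  · rw [ProbabilityTheory.cond]
    exact (integrable_smul_measure (ENNReal.inv_ne_zero.2 (measure_ne_top _ _))
      (ENNReal.inv_ne_top.2 hs)).2 hf.restrict

lemma aux_ae_cond (μ : Measure Ω) [IsFiniteMeasure μ] (X : Ω → 𝒳) (hX : Measurable X)
    {p : Ω → Prop} (h : ∀ x, ∀ᵐ ω ∂(μ[|X ⁻¹' {x}]), p ω) : ∀ᵐ ω ∂μ, p ω := by
  rw [ae_iff]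
  have hsub : {ω | ¬ p ω} ⊆ ⋃ x : 𝒳, {ω | ¬ p ω} ∩ X ⁻¹' {x} := fun ω hω =>
    Set.mem_iUnion.2 ⟨X ω, hω, rfl⟩
  refine le_antisymm (le_trans (measure_mono hsub) ?_) zero_le
  refine le_trans (measure_iUnion_le _) ?_
  have hz : ∀ x : 𝒳, μ ({ω | ¬ p ω} ∩ X ⁻¹' {x}) = 0 := by
    intro x
    by_cases hx : μ (X ⁻¹' {x}) = 0
    · exact measure_mono_null Set.inter_subset_right hx
    · have h1 : μ.restrict (X ⁻¹' {x}) {ω | ¬ p ω} = 0 := by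
        rw [aux_restrict_eq μ hx]
        simp only [Measure.smul_apply, smul_eq_mul]
        rw [ae_iff.1 (h x), mul_zero]
      rwa [Measure.restrict_apply' (hX (measurableSet_singleton x))] at h1
  simp [hz]

omit [Fintype 𝒳] in
lemma aux_ae_cond_eq (μ : Measure Ω) [IsFiniteMeasure μ] (X : Ω → 𝒳) (hX : Measurable X)
    (x : 𝒳) : ∀ᵐ ω ∂(μ[|X ⁻¹' {x}]), X ω = x := by
  rw [ae_iff, ProbabilityTheory.cond_apply (hX (measurableSet_singleton x))]
  have h0 : X ⁻¹' {x} ∩ {ω | ¬ X ω = x} = ∅ := by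
    ext ω; simp (config := {contextual := true}) [Set.mem_preimage]
  rw [h0, measure_empty, mul_zero]

end Aux

set_option maxHeartbeats 1000000 in
/-- Key lemma (abstract form). -/
lemma condexp_fiberwise {Ω 𝒳 : Type*} (m' m'' : MeasurableSpace Ω) {mΩ : MeasurableSpace Ω}
    [Fintype 𝒳] [MeasurableSpace 𝒳] [MeasurableSingletonClass 𝒳]
    (X : Ω → 𝒳) (hX : Measurable X)
    (μ : Measure Ω) [IsProbabilityMeasure μ] (hXpos : ∀ x : 𝒳, μ (X ⁻¹' {x}) ≠ 0)
    (hm' : m' ≤ mΩ) (hm'' : m'' ≤ mΩ) (hm'le : m' ≤ m'')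
    (hXm'' : ∀ x : 𝒳, MeasurableSet[m''] (X ⁻¹' {x}))
    (hslice : ∀ s : Set Ω, MeasurableSet[m''] s → ∀ x : 𝒳,
      ∃ t : Set Ω, MeasurableSet[m'] t ∧ s ∩ X ⁻¹' {x} = t ∩ X ⁻¹' {x})
    (f : Ω → ℝ) (hf : Integrable f μ) :
    MeasureTheory.condExp m'' μ f
      =ᵐ[μ] fun ω => MeasureTheory.condExp m' (μ[|X ⁻¹' {X ω}]) f ω := by
  classical
  set g : Ω → ℝ := fun ω => MeasureTheory.condExp m' (μ[|X ⁻¹' {X ω}]) f ω with hgdef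
  have hf_x : ∀ x : 𝒳, Integrable f (μ[|X ⁻¹' {x}]) := fun x => aux_integrable_cond μ hf
  have hg_eq_sum : g = fun ω => ∑ x : 𝒳,
      (X ⁻¹' {x}).indicator (MeasureTheory.condExp m' (μ[|X ⁻¹' {x}]) f) ω := by
    funext ω
    rw [Finset.sum_eq_single (X ω)
      (fun x _ hx => Set.indicator_of_notMem (fun h => hx h.symm) _)
      (fun h => absurd (Finset.mem_univ _) h)]
    exact (Set.indicator_of_mem (show ω ∈ X ⁻¹' {X ω} from rfl)
      (MeasureTheory.condExp m' (μ[|X ⁻¹' {X ω}]) f)).symm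
  have hg_int : Integrable g μ := by
    rw [hg_eq_sum]
    refine integrable_finset_sum _ fun x _ => ?_
    rw [integrable_indicator_iff (hX (measurableSet_singleton x))]
    rw [IntegrableOn, aux_restrict_eq μ (hXpos x)]
    exact (integrable_smul_measure (hXpos x) (measure_ne_top _ _)).2 integrable_condExp
  have hg_sm : StronglyMeasurable[m''] g := by
    rw [hg_eq_sum]
    exact Finset.stronglyMeasurable_fun_sum _ fun x _ =>
      ((stronglyMeasurable_condExp (m := m') (μ := μ[|X ⁻¹' {x}]) (f := f)).mono hm'le).indicator (hXm'' x)
  refine (ae_eq_condExp_of_forall_setIntegral_eq hm'' hf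
    (fun s _ _ => hg_int.integrableOn) ?_ hg_sm.aestronglyMeasurable).symm
  intro s hsm'' _
  have hs : MeasurableSet s := hm'' _ hsm''
  choose t ht' hslice' using hslice s hsm''
  have ht : ∀ x, MeasurableSet (t x) := fun x => hm' _ (ht' x)
  have hpiece : ∀ (φ : Ω → ℝ), Integrable φ μ →
      ∫ ω in s, φ ω ∂μ = ∑ x : 𝒳, ∫ ω in t x ∩ X ⁻¹' {x}, φ ω ∂μ := by
    intro φ hφ
    have hcover : s = ⋃ x ∈ (Finset.univ : Finset 𝒳), s ∩ X ⁻¹' {x} := by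
      ext ω
      simp only [Set.mem_iUnion, Set.mem_inter_iff, Set.mem_preimage, Set.mem_singleton_iff,
        Finset.mem_univ, exists_prop, true_and]
      exact ⟨fun h => ⟨X ω, h, rfl⟩, fun ⟨x, h, _⟩ => h⟩
    rw [hcover, integral_biUnion_finset]
    · exact Finset.sum_congr rfl fun x _ => by rw [hslice' x]
    · exact fun x _ => hs.inter (hX (measurableSet_singleton x))
    · intro x _ y _ hxy
      refine Set.disjoint_left.2 fun ω hω hω' => hxy ?_
      rw [← hω.2, ← hω'.2]
    · exact fun x _ => hφ.integrableOn
  rw [hpiece g hg_int, hpiece f hf]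
  refine Finset.sum_congr rfl fun x _ => ?_
  have hEq : ∀ ω ∈ t x ∩ X ⁻¹' {x}, g ω = MeasureTheory.condExp m' (μ[|X ⁻¹' {x}]) f ω := by
    rintro ω ⟨-, hω⟩
    simp only [hgdef]
    rw [show X ω = x from hω]
  rw [setIntegral_congr_fun ((ht x).inter (hX (measurableSet_singleton x))) hEq]
  have key : ∀ (ψ : Ω → ℝ), ∫ ω in t x ∩ X ⁻¹' {x}, ψ ω ∂μ
      = (μ (X ⁻¹' {x})).toReal • ∫ ω in t x, ψ ω ∂(μ[|X ⁻¹' {x}]) := by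
    intro ψ
    rw [← Measure.restrict_restrict (ht x),
      aux_restrict_eq μ (hXpos x), Measure.restrict_smul, integral_smul_measure]
  rw [key, key, setIntegral_condExp hm' (hf_x x) (ht' x)]

lemma aux_comap_le_pair {Ω F 𝒳 : Type*} [MeasurableSpace Ω] [MeasurableSpace F]
    [MeasurableSpace 𝒳] (R : Ω → F) (X : Ω → 𝒳) :
    MeasurableSpace.comap R inferInstance ≤
      MeasurableSpace.comap (fun ω => (R ω, X ω)) inferInstance := by
  rintro s ⟨u, hu, rfl⟩
  exact ⟨Prod.fst ⁻¹' u, measurable_fst hu, rfl⟩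

/-- Bridging lemma: conditional independence given `m'` under each `μ[|X = x]` implies
conditional independence given `m''` under `μ`. -/
lemma iCondIndepFun_of_cond {Ω 𝒳 ι : Type*} (m' m'' : MeasurableSpace Ω)
    {mΩ : MeasurableSpace Ω} [StandardBorelSpace Ω]
    [Fintype 𝒳] [MeasurableSpace 𝒳] [MeasurableSingletonClass 𝒳]
    (X : Ω → 𝒳) (hX : Measurable X)
    (μ : Measure Ω) [IsProbabilityMeasure μ] (hXpos : ∀ x : 𝒳, μ (X ⁻¹' {x}) ≠ 0)
    (hm' : m' ≤ mΩ) (hm'' : m'' ≤ mΩ) (hm'le : m' ≤ m'')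
    (hXm'' : ∀ x : 𝒳, MeasurableSet[m''] (X ⁻¹' {x}))
    (hslice : ∀ s : Set Ω, MeasurableSet[m''] s → ∀ x : 𝒳,
      ∃ t, MeasurableSet[m'] t ∧ s ∩ X ⁻¹' {x} = t ∩ X ⁻¹' {x})
    {β : ι → Type*} (mβ : ∀ i, MeasurableSpace (β i)) (f : ∀ i, Ω → β i)
    (hf : ∀ i, Measurable (f i))
    (h : ∀ x : 𝒳, iCondIndepFun m' hm' (m := mβ) f (μ[|X ⁻¹' {x}])) :
    iCondIndepFun m'' hm'' (m := mβ) f μ := by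
  classical
  rw [iCondIndepFun_iff m'' hm'' mβ f hf μ]
  intro s g H
  have hgmeas : ∀ i ∈ s, MeasurableSet (g i) := fun i hi => (hf i).comap_le _ (H i hi)
  have hA : MeasurableSet (⋂ i ∈ s, g i) :=
    MeasurableSet.biInter (Finset.countable_toSet s) hgmeas
  have h1 := condexp_fiberwise m' m'' X hX μ hXpos hm' hm'' hm'le hXm'' hslice
    ((⋂ i ∈ s, g i).indicator fun _ => (1 : ℝ)) ((integrable_const 1).indicator hA)
  have h2 : ∀ i ∈ s,
      MeasureTheory.condExp m'' μ ((g i).indicator fun _ => (1 : ℝ))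
        =ᵐ[μ] fun ω => MeasureTheory.condExp m' (μ[|X ⁻¹' {X ω}])
          ((g i).indicator fun _ => (1 : ℝ)) ω := fun i hi =>
    condexp_fiberwise m' m'' X hX μ hXpos hm' hm'' hm'le hXm'' hslice
      ((g i).indicator fun _ => (1 : ℝ)) ((integrable_const 1).indicator (hgmeas i hi))
  have h2' : ∀ᵐ ω ∂μ, ∀ i ∈ s,
      MeasureTheory.condExp m'' μ ((g i).indicator fun _ => (1 : ℝ)) ω
        = MeasureTheory.condExp m' (μ[|X ⁻¹' {X ω}])
            ((g i).indicator fun _ => (1 : ℝ)) ω := by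
    rw [Filter.eventually_all_finset]
    exact h2
  have h3 : ∀ᵐ ω ∂μ,
      MeasureTheory.condExp m' (μ[|X ⁻¹' {X ω}])
          ((⋂ i ∈ s, g i).indicator fun _ => (1 : ℝ)) ω
        = ∏ i ∈ s, MeasureTheory.condExp m' (μ[|X ⁻¹' {X ω}])
            ((g i).indicator fun _ => (1 : ℝ)) ω := by
    refine aux_ae_cond μ X hX fun x => ?_
    have hx := (iCondIndepFun_iff m' hm' mβ f hf (μ[|X ⁻¹' {x}])).mp (h x) s H
    filter_upwards [hx, aux_ae_cond_eq μ X hX x] with ω hω hXω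
    rw [hXω]
    simpa [Finset.prod_apply] using hω
  filter_upwards [h1, h2', h3] with ω e1 e2 e3
  calc (μ⟦⋂ i ∈ s, g i|m''⟧) ω
      = MeasureTheory.condExp m' (μ[|X ⁻¹' {X ω}])
          ((⋂ i ∈ s, g i).indicator fun _ => (1 : ℝ)) ω := e1
    _ = ∏ i ∈ s, MeasureTheory.condExp m' (μ[|X ⁻¹' {X ω}])
          ((g i).indicator fun _ => (1 : ℝ)) ω := e3
    _ = ∏ i ∈ s, (μ⟦g i|m''⟧) ω := Finset.prod_congr rfl fun i hi => (e2 i hi).symm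
    _ = (∏ i ∈ s, (μ⟦g i|m''⟧)) ω := (Finset.prod_apply _ _ _).symm


instance cond_isFiniteMeasure {Ω : Type*} [MeasurableSpace Ω] (μ : Measure Ω) (s : Set Ω) :
    IsFiniteMeasure (μ[|s]) := by
  constructor
  unfold ProbabilityTheory.cond
  simp only [Measure.smul_apply, smul_eq_mul, Measure.restrict_apply_univ]
  exact lt_of_le_of_lt (ENNReal.inv_mul_le_one _) ENNReal.one_lt_top

/-- Let `K_1, …, K_r` be a partition of `D ⊆ V` into nonempty pairwise
disjoint sets. If for every `x ∈ 𝒳` the random vectors `Y_{K_1}, …, Y_{K_r}` are mutually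
conditionally independent given `Y_{V∖D}` under `μ_x = μ(·|X = x)`, then under `μ` they are
mutually conditionally independent given the pair `(Y_{V∖D}, X)`. -/
theorem profile_iCondIndep_implies_iCondIndep_given_YDc_X
    {Ω : Type*} [MeasurableSpace Ω] [StandardBorelSpace Ω] [Nonempty Ω]
    {V : Type*} [Fintype V]
    {𝒳 : Type*} [Fintype 𝒳] [Nonempty 𝒳] [MeasurableSpace 𝒳] [MeasurableSingletonClass 𝒳]
    {E : V → Type*} [∀ a, MeasurableSpace (E a)] [∀ a, StandardBorelSpace (E a)]
    (Y : ∀ a, Ω → E a) (hY : ∀ a, Measurable (Y a))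
    (X : Ω → 𝒳) (hX : Measurable X)
    (μ : Measure Ω) [IsProbabilityMeasure μ] (hXpos : ∀ x : 𝒳, μ (X ⁻¹' {x}) ≠ 0)
    (D : Set V) (r : ℕ) (K : Fin r → Set V)
    (hKne : ∀ i, (K i).Nonempty)
    (hKdisj : Pairwise (Function.onFun Disjoint K))
    (hKunion : (⋃ i, K i) = D)
    (h : ∀ x : 𝒳,
      iCondIndepFun (MeasurableSpace.comap (restr Y Dᶜ) MeasurableSpace.pi)
        ((measurable_restr hY Dᶜ).comap_le)
        (m := fun _ => MeasurableSpace.pi)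
        (fun i : Fin r => restr Y (K i)) (μ[|X ⁻¹' {x}])) :
    iCondIndepFun
      (MeasurableSpace.comap (fun ω => (restr Y Dᶜ ω, X ω)) inferInstance)
      (((measurable_restr hY Dᶜ).prodMk hX).comap_le)
      (m := fun _ => MeasurableSpace.pi)
      (fun i : Fin r => restr Y (K i)) μ := by
  refine iCondIndepFun_of_cond _ _ X hX μ hXpos _ _
    (aux_comap_le_pair (restr Y Dᶜ) X)
    (fun x => ⟨Prod.snd ⁻¹' {x}, measurable_snd (measurableSet_singleton x), rfl⟩)
    ?_ _ _ (fun i => measurable_restr hY (K i)) h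
  rintro s ⟨u, hu, rfl⟩ x
  refine ⟨restr Y Dᶜ ⁻¹' ((fun v => (v, x)) ⁻¹' u),
    ⟨_, (measurable_id.prodMk measurable_const) hu, rfl⟩, ?_⟩
  ext ω
  simp only [Set.mem_inter_iff, Set.mem_preimage, Set.mem_singleton_iff]
  constructor
  · rintro ⟨h1, h2⟩; rw [h2] at h1; exact ⟨h1, h2⟩
  · rintro ⟨h1, h2⟩; exact ⟨h2 ▸ h1, h2⟩
end
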